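/- Limiting case (ii) of the dropout energy: if r^(n) ~ p^(S_d)(ρ_n) with ρ_n → 0, then the scaled expectation -[M / E(Σ_i r_i^(n))] · E_{r^(n)} E_{θ̃~q}[log p(r^(n)θ + (1-r^(n))θ̃, D)] converges to the structured energy U^(S)(θ) = -Σ_{i=1}^M E_{θ̃~q}[log p(θ_i, θ̃_{¬i}, D)]. -/

import Mathlib

open Filter Set

private lemma aux_card_pos {M : ℕ} (r : Fin M → Bool) (hr : r ≠ fun _ => false) :
    1 ≤ (Finset.univ.filter (fun j => r j = true)).card := by
  obtain ⟨j, hj⟩ := Function.ne_iff.mp hr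
  exact Finset.card_pos.mpr ⟨j, Finset.mem_filter.mpr ⟨Finset.mem_univ j,
    Bool.ne_false_iff.mp hj⟩⟩

private lemma aux_card_basis {M : ℕ} (i : Fin M) :
    (Finset.univ.filter (fun j => decide (j = i) = true)).card = 1 := by
  have : (Finset.univ.filter (fun j => decide (j = i) = true)) = {i} := by
    ext j; simp
  rw [this, Finset.card_singleton]

private lemma aux_filter_image (M : ℕ) :
    ((Finset.univ.filter (fun r : Fin M → Bool => r ≠ fun _ => false)).filter
      (fun r => (Finset.univ.filter (fun j => r j = true)).card = 1))
    = Finset.image (fun i : Fin M => fun j => decide (j = i)) Finset.univ := by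
  ext r
  simp only [Finset.mem_filter, Finset.mem_image, Finset.mem_univ, true_and]
  constructor
  · rintro ⟨-, hc⟩
    obtain ⟨a, ha⟩ := Finset.card_eq_one.mp hc
    refine ⟨a, funext fun j => ?_⟩
    have hmem : r j = true ↔ j = a := by
      constructor
      · intro h
        have : j ∈ Finset.univ.filter (fun j => r j = true) :=
          Finset.mem_filter.mpr ⟨Finset.mem_univ j, h⟩
        rw [ha] at this; simpa using this
      · intro h
        have : a ∈ Finset.univ.filter (fun j => r j = true) := by
          rw [ha]; simp
        subst h; exact (Finset.mem_filter.mp this).2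
    by_cases h : j = a
    · subst h; simp [hmem.mpr rfl]
    · simp only [h, decide_false]
      cases hrj : r j
      · rfl
      · exact absurd (hmem.mp hrj) h
  · rintro ⟨i, rfl⟩
    refine ⟨?_, aux_card_basis i⟩
    intro h
    have := congrFun h i
    simp at this

private lemma aux_eval (M : ℕ) (g : (Fin M → Bool) → ℝ) :
    (∑ r ∈ Finset.univ.filter (fun r : Fin M → Bool => r ≠ fun _ => false),
      (0:ℝ) ^ ((Finset.univ.filter (fun j => r j = true)).card - 1)
        * (1 - (0:ℝ)) ^ (M - (Finset.univ.filter (fun j => r j = true)).card) * g r)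
    = ∑ i : Fin M, g (fun j => decide (j = i)) := by
  have h1 : ∀ r ∈ Finset.univ.filter (fun r : Fin M → Bool => r ≠ fun _ => false),
      (0:ℝ) ^ ((Finset.univ.filter (fun j => r j = true)).card - 1)
        * (1 - (0:ℝ)) ^ (M - (Finset.univ.filter (fun j => r j = true)).card) * g r
      = if (Finset.univ.filter (fun j => r j = true)).card = 1 then g r else 0 := by
    intro r hr
    have hc := aux_card_pos r (Finset.mem_filter.mp hr).2
    rcases eq_or_lt_of_le hc with h | h
    · simp [← h]
    · rw [if_neg (by omega)]
      rw [zero_pow (by omega)]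
      ring
  rw [Finset.sum_congr rfl h1, ← Finset.sum_filter, aux_filter_image M,
    Finset.sum_image]
  intro i _ i' _ h
  have := congrFun h i
  simpa using this

private lemma aux_ratio (a m num den : ℝ) (ha : a ≠ 0) :
    -(m / (a * den)) * (a * num) = -(m * num / den) := by
  rcases eq_or_ne den 0 with h | h
  · simp [h]
  · field_simp

/-- Limiting case (ii) of the dropout energy: with
`f(r) = E_{θ̃~q}[log p(rθ + (1-r)θ̃, D)]` (finite on the finite support
`R = {0,1}^M \ {0}`), masks `r^(n) ~ p^(S_d)(ρ_n)` and `ρ_n → 0`, the scaled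
expectation `-(M / E[Σ_i r_i^(n)]) · E_{r^(n)}[f(r^(n))]` converges to the
structured energy `U^(S)(θ) = -Σ_i f(e_i)`. -/
theorem stmt12 (M : ℕ) (hM : 1 ≤ M) (f : (Fin M → Bool) → ℝ)
    (p : ℝ → (Fin M → Bool) → ℝ)
    (hp : ∀ ρ ∈ Ioo (0:ℝ) 1, ∀ r : Fin M → Bool,
      p ρ r = ρ ^ ((Finset.univ.filter (fun j => r j = true)).card)
        * (1 - ρ) ^ (M - (Finset.univ.filter (fun j => r j = true)).card)
        / (1 - (1 - ρ) ^ M))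
    (ρ : ℕ → ℝ) (hρ : ∀ n, ρ n ∈ Ioo (0:ℝ) 1)
    (hρ0 : Tendsto ρ atTop (nhds 0)) :
    Tendsto
      (fun n =>
        -((M : ℝ) /
            (∑ r ∈ Finset.univ.filter
                (fun r : Fin M → Bool => r ≠ fun _ => false),
              p (ρ n) r *
                ((Finset.univ.filter (fun j => r j = true)).card : ℝ)))
          * (∑ r ∈ Finset.univ.filter
                (fun r : Fin M → Bool => r ≠ fun _ => false),
              p (ρ n) r * f r))
      atTop (nhds (-∑ i : Fin M, f fun j => decide (j = i))) := by
  set S := Finset.univ.filter (fun r : Fin M → Bool => r ≠ fun _ => false) with hS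
  set c := fun r : Fin M → Bool => (Finset.univ.filter (fun j => r j = true)).card
    with hc
  set Num : ℝ → ℝ := fun x => ∑ r ∈ S, x ^ (c r - 1) * (1 - x) ^ (M - c r) * f r
    with hNumdef
  set Den : ℝ → ℝ := fun x => ∑ r ∈ S, x ^ (c r - 1) * (1 - x) ^ (M - c r) * (c r : ℝ)
    with hDendef
  have hM0 : (M : ℝ) ≠ 0 := Nat.cast_ne_zero.mpr (by omega)
  -- pointwise identity
  have key : ∀ n,
      -((M : ℝ) / (∑ r ∈ S, p (ρ n) r * (c r : ℝ))) * (∑ r ∈ S, p (ρ n) r * f r)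
      = -((M : ℝ) * Num (ρ n) / Den (ρ n)) := by
    intro n
    obtain ⟨hx0, hx1⟩ := hρ n
    set x := ρ n
    have hD : 0 < 1 - (1 - x) ^ M := by
      have : (1 - x) ^ M < 1 := pow_lt_one₀ (by linarith) (by linarith) (by omega)
      linarith
    have ha : x / (1 - (1 - x) ^ M) ≠ 0 := div_ne_zero (ne_of_gt hx0) (ne_of_gt hD)
    have hsum : ∀ fn : (Fin M → Bool) → ℝ,
        ∑ r ∈ S, p x r * fn r
        = (x / (1 - (1 - x) ^ M)) *
            ∑ r ∈ S, x ^ (c r - 1) * (1 - x) ^ (M - c r) * fn r := by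
      intro fn
      rw [Finset.mul_sum]
      refine Finset.sum_congr rfl fun r hr => ?_
      rw [hp x ⟨hx0, hx1⟩ r]
      have h1 : 1 ≤ c r := aux_card_pos r (Finset.mem_filter.mp hr).2
      have hpow : x ^ (c r) = x * x ^ (c r - 1) := by
        conv_lhs => rw [show c r = (c r - 1) + 1 by omega]
        rw [pow_succ]; ring
      rw [show ((Finset.univ.filter (fun j => r j = true)).card) = c r from rfl, hpow]
      field_simp
    rw [hsum, hsum]
    exact aux_ratio _ _ _ _ ha
  have hfun : (fun n =>
      -((M : ℝ) / (∑ r ∈ S, p (ρ n) r * (c r : ℝ))) * (∑ r ∈ S, p (ρ n) r * f r))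
      = fun n => -((M : ℝ) * Num (ρ n) / Den (ρ n)) := funext key
  rw [hfun]
  -- continuity and limits
  have hcontNum : Continuous Num := by
    apply continuous_finset_sum
    intro r _
    fun_prop
  have hcontDen : Continuous Den := by
    apply continuous_finset_sum
    intro r _
    fun_prop
  have hNum0 : Num 0 = ∑ i : Fin M, f (fun j => decide (j = i)) := aux_eval M f
  have hDen0 : Den 0 = (M : ℝ) := by
    rw [hDendef]
    simp only
    rw [aux_eval M (fun r => (c r : ℝ))]
    simp only [hc]
    rw [Finset.sum_congr rfl (fun i _ => by rw [aux_card_basis i])]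
    simp
  have hN : Tendsto (fun n => Num (ρ n)) atTop (nhds (Num 0)) :=
    (hcontNum.tendsto 0).comp hρ0
  have hD : Tendsto (fun n => Den (ρ n)) atTop (nhds (Den 0)) :=
    (hcontDen.tendsto 0).comp hρ0
  have hlim : Tendsto (fun n => -((M : ℝ) * Num (ρ n) / Den (ρ n))) atTop
      (nhds (-((M : ℝ) * Num 0 / Den 0))) :=
    ((tendsto_const_nhds.mul hN).div hD (by rw [hDen0]; exact hM0)).neg
  have : -((M : ℝ) * Num 0 / Den 0) = -∑ i : Fin M, f fun j => decide (j = i) := by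
    rw [hNum0, hDen0, mul_comm, mul_div_assoc, div_self hM0, mul_one]
  rwa [this] at hlim
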